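/- Let n ≥ 1 and let (A_1, …, A_{2n}) be a Clifford system on ℝ^m. Then the degree-4 polynomial u(x) = Σ_{i=1}^n ⟨x,A_ix⟩² − Σ_{i=1}^n ⟨x,A_{n+i}x⟩² is harmonic on ℝ^m, i.e. Δu = 0. -/

import Mathlib

open RealInnerProductSpace

/-- The quadratic form `P(x) = ⟨x, A x⟩` associated to an `m × m` real matrix `A`. -/
noncomputable def quadForm {m : ℕ} (A : Matrix (Fin m) (Fin m) ℝ)
    (x : EuclideanSpace ℝ (Fin m)) : ℝ :=
  ⟪x, Matrix.toEuclideanLin A x⟫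

/-- A Clifford system on `ℝ^m`. -/
def IsCliffordSystem {m N : ℕ} (A : Fin N → Matrix (Fin m) (Fin m) ℝ) : Prop :=
  (∀ i, (A i).IsSymm) ∧
    ∀ i j, A i * A j + A j * A i
      = (if i = j then (2 : ℝ) else 0) • (1 : Matrix (Fin m) (Fin m) ℝ)

/-- For a Clifford system `(A_1, …, A_{2n})` on `ℝ^m`, the degree-4 polynomial
`u(x) = Σ_{i=1}^n ⟨x, A_i x⟩² − Σ_{i=1}^n ⟨x, A_{n+i} x⟩²`. -/
noncomputable def cliffU {m n : ℕ} (A : Fin (n + n) → Matrix (Fin m) (Fin m) ℝ)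
    (x : EuclideanSpace ℝ (Fin m)) : ℝ :=
  ∑ i : Fin n, (quadForm (A (Fin.castAdd n i)) x) ^ 2
    - ∑ i : Fin n, (quadForm (A (Fin.natAdd n i)) x) ^ 2

/-- For a Clifford system `(A_1, …, A_{2n})` on `ℝ^m`, the degree-4 polynomial
`q(x) = Σ_{i=1}^{2n} ⟨x, A_i x⟩² = ‖P(x)‖²`. -/
noncomputable def cliffQ {m n : ℕ} (A : Fin (n + n) → Matrix (Fin m) (Fin m) ℝ)
    (x : EuclideanSpace ℝ (Fin m)) : ℝ :=
  ∑ i : Fin (n + n), (quadForm (A i) x) ^ 2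

/-- The Euclidean Laplacian `Δf(x) = Σ_i ∂²f/∂x_i²(x)` on `ℝ^m`. -/
noncomputable def laplacian {m : ℕ} (f : EuclideanSpace ℝ (Fin m) → ℝ)
    (x : EuclideanSpace ℝ (Fin m)) : ℝ :=
  ∑ i, fderiv ℝ (fun y => fderiv ℝ f y (EuclideanSpace.single i 1)) x
    (EuclideanSpace.single i 1)

lemma inner_symm' {m : ℕ} {A : Matrix (Fin m) (Fin m) ℝ} (hA : A.IsSymm)
    (x y : EuclideanSpace ℝ (Fin m)) :
    ⟪Matrix.toEuclideanLin A x, y⟫ = ⟪x, Matrix.toEuclideanLin A y⟫ := by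
  have h : A.IsHermitian := by rwa [Matrix.IsHermitian, Matrix.conjTranspose_eq_transpose_of_trivial]
  exact (Matrix.isHermitian_iff_isSymmetric.mp h) x y

lemma hasFDerivAt_quadForm {m : ℕ} {A : Matrix (Fin m) (Fin m) ℝ} (hA : A.IsSymm)
    (x : EuclideanSpace ℝ (Fin m)) :
    HasFDerivAt (quadForm A) ((2:ℝ) • (innerSL ℝ (Matrix.toEuclideanLin A x))) x := by
  set L := Matrix.toEuclideanLin A with hL
  set Lc := LinearMap.toContinuousLinearMap L with hLc
  have h1 : HasFDerivAt (fun y : EuclideanSpace ℝ (Fin m) => y) (ContinuousLinearMap.id ℝ _) x :=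
    hasFDerivAt_id x
  have h2 : HasFDerivAt (fun y => L y) Lc x := Lc.hasFDerivAt
  have h3 := h1.inner ℝ h2
  refine h3.congr_fderiv ?_
  symm
  ext v
  rw [ContinuousLinearMap.smul_apply, innerSL_apply_apply, ContinuousLinearMap.comp_apply,
    ContinuousLinearMap.prod_apply, fderivInnerCLM_apply]
  have hv : Lc v = L v := rfl
  rw [ContinuousLinearMap.id_apply, hv]
  rw [← inner_symm' hA x v, real_inner_comm (L x) v]
  rw [smul_eq_mul]; ring

lemma hasFDerivAt_quadForm_sq {m : ℕ} {A : Matrix (Fin m) (Fin m) ℝ} (hA : A.IsSymm)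
    (x : EuclideanSpace ℝ (Fin m)) :
    HasFDerivAt (fun y => quadForm A y ^ 2)
      ((4 * quadForm A x) • (innerSL ℝ (Matrix.toEuclideanLin A x))) x := by
  have h := (hasFDerivAt_quadForm hA x).fun_mul (hasFDerivAt_quadForm hA x)
  have he : (fun y => quadForm A y ^ 2) = fun y => quadForm A y * quadForm A y := by
    funext y; ring
  rw [he]
  refine h.congr_fderiv ?_
  ext v
  simp [smul_eq_mul]
  ring

lemma fderiv_quadForm_sq_apply {m : ℕ} {A : Matrix (Fin m) (Fin m) ℝ} (hA : A.IsSymm)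
    (y : EuclideanSpace ℝ (Fin m)) (e : EuclideanSpace ℝ (Fin m)) :
    fderiv ℝ (fun z => quadForm A z ^ 2) y e
      = 4 * quadForm A y * ⟪Matrix.toEuclideanLin A y, e⟫ := by
  rw [(hasFDerivAt_quadForm_sq hA y).fderiv]
  simp [smul_eq_mul, mul_assoc]

lemma fderiv_fderiv_quadForm_sq {m : ℕ} {A : Matrix (Fin m) (Fin m) ℝ} (hA : A.IsSymm)
    (x e : EuclideanSpace ℝ (Fin m)) :
    fderiv ℝ (fun y => fderiv ℝ (fun z => quadForm A z ^ 2) y e) x e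
      = 8 * ⟪Matrix.toEuclideanLin A x, e⟫ ^ 2
        + 4 * quadForm A x * ⟪Matrix.toEuclideanLin A e, e⟫ := by
  set L := Matrix.toEuclideanLin A with hL
  set Lc := LinearMap.toContinuousLinearMap L with hLc
  have hfun : (fun y => fderiv ℝ (fun z => quadForm A z ^ 2) y e)
      = fun y => (4 * quadForm A y) * ⟪L y, e⟫ := by
    funext y; rw [fderiv_quadForm_sq_apply hA]
  rw [hfun]
  have hM : HasFDerivAt (fun y => (⟪L y, e⟫ : ℝ)) ((innerSL ℝ e).comp Lc) x := by
    have he : (fun y => (⟪L y, e⟫ : ℝ)) = fun y => ((innerSL ℝ e).comp Lc) y := by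
      funext y
      rw [ContinuousLinearMap.comp_apply, innerSL_apply_apply, real_inner_comm]
      rfl
    rw [he]
    exact ((innerSL ℝ e).comp Lc).hasFDerivAt
  have hq4 : HasFDerivAt (fun y => 4 * quadForm A y)
      ((4:ℝ) • ((2:ℝ) • (innerSL ℝ (L x)))) x := (hasFDerivAt_quadForm hA x).const_mul 4
  have h := (hq4.fun_mul hM).fderiv
  rw [h]
  rw [ContinuousLinearMap.add_apply, ContinuousLinearMap.smul_apply,
    ContinuousLinearMap.smul_apply, ContinuousLinearMap.comp_apply, innerSL_apply_apply,
    ContinuousLinearMap.smul_apply, ContinuousLinearMap.smul_apply, innerSL_apply_apply]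
  have hv : Lc e = L e := rfl
  rw [hv, real_inner_comm e (L e)]
  simp only [smul_eq_mul]
  ring

lemma toEuclideanLin_mul' {m : ℕ} (A B : Matrix (Fin m) (Fin m) ℝ) (x : EuclideanSpace ℝ (Fin m)) :
    Matrix.toEuclideanLin (A * B) x = Matrix.toEuclideanLin A (Matrix.toEuclideanLin B x) := by
  simp [Matrix.toEuclideanLin_apply, Matrix.mulVec_mulVec]

lemma laplacian_quadForm_sq {m : ℕ} {A : Matrix (Fin m) (Fin m) ℝ} (hA : A.IsSymm)
    (x : EuclideanSpace ℝ (Fin m)) :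
    laplacian (fun z => quadForm A z ^ 2) x
      = 8 * quadForm (A * A) x + 4 * quadForm A x * A.trace := by
  set L := Matrix.toEuclideanLin A with hL
  unfold laplacian
  have h1 : ∀ i : Fin m, fderiv ℝ (fun y => fderiv ℝ (fun z => quadForm A z ^ 2) y
      (EuclideanSpace.single i 1)) x (EuclideanSpace.single i 1)
      = 8 * (L x i) ^ 2 + 4 * quadForm A x * A i i := by
    intro i
    rw [fderiv_fderiv_quadForm_sq hA]
    congr 2
    · congr 1
      simp [EuclideanSpace.inner_single_right]
      rfl
    · simp [Matrix.toEuclideanLin_apply, EuclideanSpace.inner_single_right]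
  rw [Finset.sum_congr rfl fun i _ => h1 i]
  have hq2 : quadForm (A * A) x = ∑ i, (L x i) ^ 2 := by
    rw [quadForm, toEuclideanLin_mul', ← inner_symm' hA x (L x)]
    simp [PiLp.inner_apply, sq]
    rfl
  have htr : A.trace = ∑ i, A i i := by simp [Matrix.trace, Matrix.diag]
  rw [hq2, htr, Finset.sum_add_distrib, ← Finset.mul_sum, ← Finset.mul_sum]

lemma differentiableAt_fderiv_quadForm_sq {m : ℕ} {A : Matrix (Fin m) (Fin m) ℝ} (hA : A.IsSymm)
    (e x : EuclideanSpace ℝ (Fin m)) :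
    DifferentiableAt ℝ (fun y => fderiv ℝ (fun z => quadForm A z ^ 2) y e) x := by
  set L := Matrix.toEuclideanLin A with hL
  set Lc := LinearMap.toContinuousLinearMap L with hLc
  have hfun : (fun y => fderiv ℝ (fun z => quadForm A z ^ 2) y e)
      = fun y => (4 * quadForm A y) * ⟪L y, e⟫ := by
    funext y; rw [fderiv_quadForm_sq_apply hA]
  rw [hfun]
  have hM : HasFDerivAt (fun y => (⟪L y, e⟫ : ℝ)) ((innerSL ℝ e).comp Lc) x := by
    have he : (fun y => (⟪L y, e⟫ : ℝ)) = fun y => ((innerSL ℝ e).comp Lc) y := by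
      funext y
      rw [ContinuousLinearMap.comp_apply, innerSL_apply_apply, real_inner_comm]
      rfl
    rw [he]
    exact ((innerSL ℝ e).comp Lc).hasFDerivAt
  exact (((hasFDerivAt_quadForm hA x).const_mul 4).mul hM).differentiableAt

lemma fderiv_cliffU_apply {m n : ℕ} {A : Fin (n + n) → Matrix (Fin m) (Fin m) ℝ}
    (hA : ∀ j, (A j).IsSymm) (y e : EuclideanSpace ℝ (Fin m)) :
    fderiv ℝ (cliffU A) y e
      = ∑ i : Fin n, fderiv ℝ (fun z => quadForm (A (Fin.castAdd n i)) z ^ 2) y e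
        - ∑ i : Fin n, fderiv ℝ (fun z => quadForm (A (Fin.natAdd n i)) z ^ 2) y e := by
  have hd : ∀ j : Fin (n + n), DifferentiableAt ℝ (fun z => quadForm (A j) z ^ 2) y :=
    fun j => (hasFDerivAt_quadForm_sq (hA j) y).differentiableAt
  have h1 : DifferentiableAt ℝ (fun z => ∑ i : Fin n, quadForm (A (Fin.castAdd n i)) z ^ 2) y :=
    DifferentiableAt.fun_sum fun i _ => hd _
  have h2 : DifferentiableAt ℝ (fun z => ∑ i : Fin n, quadForm (A (Fin.natAdd n i)) z ^ 2) y :=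
    DifferentiableAt.fun_sum fun i _ => hd _
  have : cliffU A = fun z => (∑ i : Fin n, quadForm (A (Fin.castAdd n i)) z ^ 2)
      - ∑ i : Fin n, quadForm (A (Fin.natAdd n i)) z ^ 2 := rfl
  rw [this, fderiv_fun_sub h1 h2, ContinuousLinearMap.sub_apply,
    fderiv_fun_sum (fun i _ => hd _), fderiv_fun_sum (fun i _ => hd _),
    ContinuousLinearMap.sum_apply, ContinuousLinearMap.sum_apply]

lemma laplacian_cliffU {m n : ℕ} {A : Fin (n + n) → Matrix (Fin m) (Fin m) ℝ}
    (hA : ∀ j, (A j).IsSymm) (x : EuclideanSpace ℝ (Fin m)) :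
    laplacian (cliffU A) x
      = ∑ i : Fin n, laplacian (fun z => quadForm (A (Fin.castAdd n i)) z ^ 2) x
        - ∑ i : Fin n, laplacian (fun z => quadForm (A (Fin.natAdd n i)) z ^ 2) x := by
  unfold laplacian
  have key : ∀ e : Fin m,
      fderiv ℝ (fun y => fderiv ℝ (cliffU A) y (EuclideanSpace.single e 1)) x
        (EuclideanSpace.single e 1)
      = ∑ i : Fin n, fderiv ℝ (fun y => fderiv ℝ (fun z => quadForm (A (Fin.castAdd n i)) z ^ 2) y
            (EuclideanSpace.single e 1)) x (EuclideanSpace.single e 1)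
        - ∑ i : Fin n, fderiv ℝ (fun y => fderiv ℝ (fun z => quadForm (A (Fin.natAdd n i)) z ^ 2) y
            (EuclideanSpace.single e 1)) x (EuclideanSpace.single e 1) := by
    intro e
    set ee := (EuclideanSpace.single e 1 : EuclideanSpace ℝ (Fin m))
    have hfe : (fun y => fderiv ℝ (cliffU A) y ee)
        = fun y => (∑ i : Fin n, fderiv ℝ (fun z => quadForm (A (Fin.castAdd n i)) z ^ 2) y ee)
          - ∑ i : Fin n, fderiv ℝ (fun z => quadForm (A (Fin.natAdd n i)) z ^ 2) y ee := by
      funext y; exact fderiv_cliffU_apply hA y ee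
    rw [hfe]
    have hd : ∀ j : Fin (n + n),
        DifferentiableAt ℝ (fun y => fderiv ℝ (fun z => quadForm (A j) z ^ 2) y ee) x :=
      fun j => differentiableAt_fderiv_quadForm_sq (hA j) ee x
    rw [fderiv_fun_sub (DifferentiableAt.fun_sum fun i _ => hd _) (DifferentiableAt.fun_sum fun i _ => hd _),
      ContinuousLinearMap.sub_apply, fderiv_fun_sum (fun i _ => hd _), fderiv_fun_sum (fun i _ => hd _),
      ContinuousLinearMap.sum_apply, ContinuousLinearMap.sum_apply]
  rw [Finset.sum_congr rfl fun e _ => key e, Finset.sum_sub_distrib, Finset.sum_comm]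
  congr 1
  exact Finset.sum_comm

lemma cliff_sq_one {m N : ℕ} {A : Fin N → Matrix (Fin m) (Fin m) ℝ}
    (hA : IsCliffordSystem A) (j : Fin N) : A j * A j = 1 := by
  have h := hA.2 j j
  rw [if_pos rfl] at h
  have h2 : (2:ℝ) • (A j * A j) = (2:ℝ) • (1 : Matrix (Fin m) (Fin m) ℝ) := by
    rw [two_smul]; exact h
  have : ((2:ℝ)⁻¹ • ((2:ℝ) • (A j * A j))) = ((2:ℝ)⁻¹ • ((2:ℝ) • (1 : Matrix (Fin m) (Fin m) ℝ))) := by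
    rw [h2]
  simpa [smul_smul] using this

lemma cliff_trace_zero {m N : ℕ} {A : Fin N → Matrix (Fin m) (Fin m) ℝ}
    (hA : IsCliffordSystem A) (hN : 2 ≤ N) (j : Fin N) : (A j).trace = 0 := by
  haveI : Nontrivial (Fin N) := Fin.nontrivial_iff_two_le.mpr hN
  obtain ⟨j', hj'⟩ := exists_ne j
  have h1 : A j' * A j' = 1 := cliff_sq_one hA j'
  have h2 : A j * A j' = -(A j' * A j) := by
    have h := hA.2 j j'
    rw [if_neg (Ne.symm hj'), zero_smul] at h
    exact eq_neg_of_add_eq_zero_left h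
  have key : (A j).trace = -(A j).trace := by
    calc (A j).trace = (A j * (A j' * A j')).trace := by rw [h1, mul_one]
      _ = ((A j * A j') * A j').trace := by rw [mul_assoc]
      _ = (A j' * (A j * A j')).trace := (Matrix.trace_mul_comm _ _).symm
      _ = (A j' * (-(A j' * A j))).trace := by rw [← h2]
      _ = (-((A j' * A j') * A j)).trace := by rw [mul_neg, mul_assoc]
      _ = -(A j).trace := by rw [h1, one_mul, Matrix.trace_neg]
  linarith


/-- For a Clifford system `(A_1, …, A_{2n})` on `ℝ^m` (`n ≥ 1`), the
degree-4 polynomial `u(x) = Σ_{i=1}^n ⟨x,A_ix⟩² − Σ_{i=1}^n ⟨x,A_{n+i}x⟩²` is harmonic. -/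
theorem u_harmonic {m n : ℕ} (hn : 1 ≤ n)
    (A : Fin (n + n) → Matrix (Fin m) (Fin m) ℝ) (hA : IsCliffordSystem A) :
    ∀ x : EuclideanSpace ℝ (Fin m), laplacian (cliffU A) x = 0 := by
  intro x
  rw [laplacian_cliffU hA.1]
  have hterm : ∀ j, laplacian (fun z => quadForm (A j) z ^ 2) x = 8 * quadForm 1 x := by
    intro j
    rw [laplacian_quadForm_sq (hA.1 j), cliff_sq_one hA j,
      cliff_trace_zero hA (by omega) j]
    ring
  simp only [hterm, Finset.sum_const, Finset.card_univ, Fintype.card_fin]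
  ring
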